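/- Let E be a real inner product space, Q ⊆ E a convex set, and f : E → ℝ a convex differentiable function whose gradient is L-Lipschitz on Q (‖∇f(x) − ∇f(y)‖ ≤ L‖x − y‖ for all x, y ∈ Q). Suppose g̃ : E → E satisfies ‖g̃(x) − ∇f(x)‖ ≤ Δ for all x ∈ Q, and f_δ : E → ℝ satisfies f_δ(x) ≤ f(x) ≤ f_δ(x) + δ for all x ∈ Q, where Δ, δ ≥ 0. Then for all x, y ∈ Q: f_δ(x) + ⟨g̃(x), y − x⟩ − Δ‖y − x‖ ≤ f(y) ≤ f_δ(x) + ⟨g̃(x), y − x⟩ + (L/2)‖y − x‖² + Δ‖y − x‖ + δ. -/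

import Mathlib

open scoped RealInnerProductSpace
open Set Filter Topology

section Aux

variable {E : Type*} [NormedAddCommGroup E] [InnerProductSpace ℝ E] [CompleteSpace E]

private lemma line_deriv_aux (f : E → ℝ) (f' : E → E)
    (hdiff : ∀ x, HasGradientAt f (f' x) x) (x v : E) (t : ℝ) :
    HasDerivAt (fun s : ℝ => f (x + s • v)) ⟪f' (x + t • v), v⟫ t := by
  have hc : HasDerivAt (fun s : ℝ => x + s • v) v t := by
    simpa using ((hasDerivAt_id t).smul_const v).const_add x
  have hf := (hdiff (x + t • v)).hasFDerivAt
  have h := hf.comp_hasDerivAt t hc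
  have : (InnerProductSpace.toDual ℝ E (f' (x + t • v))) v = ⟪f' (x + t • v), v⟫ := rfl
  exact h

private lemma seg_mem_aux (Q : Set E) (hQ : Convex ℝ Q) {x y : E}
    (hx : x ∈ Q) (hy : y ∈ Q) {t : ℝ} (ht0 : 0 ≤ t) (ht1 : t ≤ 1) :
    x + t • (y - x) ∈ Q := by
  have : x + t • (y - x) = (1 - t) • x + t • y := by
    rw [smul_sub, sub_smul, one_smul]; abel
  rw [this]
  exact hQ hx hy (by linarith) ht0 (by ring)

private lemma grad_lower_aux (Q : Set E) (f : E → ℝ) (f' : E → E)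
    (hdiff : ∀ x, HasGradientAt f (f' x) x) (hconv : ConvexOn ℝ Q f)
    {x y : E} (hx : x ∈ Q) (hy : y ∈ Q) :
    f x + ⟪f' x, y - x⟫ ≤ f y := by
  set v := y - x with hv
  have hder : HasDerivAt (fun s : ℝ => f (x + s • v)) ⟪f' x, v⟫ 0 := by
    have := line_deriv_aux f f' hdiff x v 0
    simpa using this
  have htend :
      Filter.Tendsto (slope (fun s : ℝ => f (x + s • v)) 0) (𝓝[>] (0:ℝ))
        (𝓝 ⟪f' x, v⟫) := by
    have h1 := hasDerivAt_iff_tendsto_slope.mp hder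
    exact h1.mono_left (nhdsWithin_mono 0 fun t ht => ne_of_gt ht)
  have hev : ∀ᶠ t in 𝓝[>] (0:ℝ),
      slope (fun s : ℝ => f (x + s • v)) 0 t ≤ f y - f x := by
    filter_upwards [Ioc_mem_nhdsGT_of_mem (by norm_num : (0:ℝ) ∈ Ico 0 1)]
      with t ht
    obtain ⟨ht0, ht1⟩ := ht
    have hmem : f (x + t • v) ≤ (1 - t) * f x + t * f y := by
      have h := hconv.2 hx hy (by linarith : (0:ℝ) ≤ 1 - t) ht0.le (by ring)
      have hxy : (1 - t) • x + t • y = x + t • v := by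
        rw [hv, smul_sub, sub_smul, one_smul]; abel
      rw [hxy] at h
      simpa using h
    rw [slope_def_field]
    simp only [zero_smul, add_zero, sub_zero]
    rw [div_le_iff₀ ht0]
    nlinarith
  have := le_of_tendsto htend hev
  linarith

private lemma grad_upper_aux (Q : Set E) (hQ : Convex ℝ Q) (f : E → ℝ) (f' : E → E)
    (hdiff : ∀ x, HasGradientAt f (f' x) x)
    (L : ℝ) (hL : 0 ≤ L)
    (hLip : ∀ x ∈ Q, ∀ y ∈ Q, ‖f' x - f' y‖ ≤ L * ‖x - y‖)
    {x y : E} (hx : x ∈ Q) (hy : y ∈ Q) :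
    f y ≤ f x + ⟪f' x, y - x⟫ + L / 2 * ‖y - x‖ ^ 2 := by
  set v := y - x with hv
  set g : ℝ → ℝ := fun t => ⟪f' (x + t • v), v⟫ with hg
  have hder : ∀ t : ℝ, HasDerivAt (fun s : ℝ => f (x + s • v)) (g t) t :=
    fun t => line_deriv_aux f f' hdiff x v t
  have hmem : ∀ t ∈ Icc (0:ℝ) 1, x + t • v ∈ Q := fun t ht =>
    seg_mem_aux Q hQ hx hy ht.1 ht.2
  -- g is Lipschitz on [0,1], hence continuous, hence integrable
  have hlipg : LipschitzOnWith (Real.toNNReal (L * ‖v‖ ^ 2)) g (Icc (0:ℝ) 1) := by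
    apply LipschitzOnWith.of_dist_le_mul
    intro s hs t ht
    have hst : ‖f' (x + s • v) - f' (x + t • v)‖ ≤ L * (dist s t * ‖v‖) := by
      have := hLip _ (hmem s hs) _ (hmem t ht)
      have heq : x + s • v - (x + t • v) = (s - t) • v := by
        rw [sub_smul]; abel
      rw [heq, norm_smul] at this
      simpa [Real.dist_eq, Real.norm_eq_abs] using this
    have h1 : dist (g s) (g t) ≤ ‖f' (x + s • v) - f' (x + t • v)‖ * ‖v‖ := by
      rw [Real.dist_eq, hg]
      have : ⟪f' (x + s • v), v⟫ - ⟪f' (x + t • v), v⟫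
          = ⟪f' (x + s • v) - f' (x + t • v), v⟫ := by
        rw [inner_sub_left]
      rw [this]
      exact abs_real_inner_le_norm _ _
    calc dist (g s) (g t) ≤ (L * (dist s t * ‖v‖)) * ‖v‖ := by
          refine h1.trans ?_
          exact mul_le_mul_of_nonneg_right hst (norm_nonneg v)
      _ = Real.toNNReal (L * ‖v‖ ^ 2) * dist s t := by
          have hnn : (0:ℝ) ≤ L * ‖v‖ ^ 2 := by positivity
          rw [Real.coe_toNNReal _ hnn]; ring
  have hcont : ContinuousOn g (Icc (0:ℝ) 1) := hlipg.continuousOn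
  have hint : IntervalIntegrable g MeasureTheory.volume 0 1 :=
    (hcont.mono (by rw [uIcc_of_le (by norm_num : (0:ℝ) ≤ 1)])).intervalIntegrable
  have hftc : f (x + (1:ℝ) • v) - f (x + (0:ℝ) • v) = ∫ t in (0:ℝ)..1, g t :=
    (intervalIntegral.integral_eq_sub_of_hasDerivAt
      (fun t ht => hder t) hint).symm
  have hbound : ∀ t ∈ Icc (0:ℝ) 1, g t ≤ ⟪f' x, v⟫ + L * ‖v‖ ^ 2 * t := by
    intro t ht
    have hsplit : g t = ⟪f' x, v⟫ + ⟪f' (x + t • v) - f' x, v⟫ := by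
      rw [hg]; simp [inner_sub_left]
    rw [hsplit]
    have h2 : ⟪f' (x + t • v) - f' x, v⟫ ≤ ‖f' (x + t • v) - f' x‖ * ‖v‖ :=
      real_inner_le_norm _ _
    have h3 : ‖f' (x + t • v) - f' x‖ ≤ L * (t * ‖v‖) := by
      have := hLip _ (hmem t ht) _ (by simpa using hmem 0 (by norm_num))
      have heq : x + t • v - x = t • v := by abel
      rw [heq, norm_smul, Real.norm_eq_abs, abs_of_nonneg ht.1] at this
      simpa using this
    have h4 : ‖f' (x + t • v) - f' x‖ * ‖v‖ ≤ L * (t * ‖v‖) * ‖v‖ :=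
      mul_le_mul_of_nonneg_right h3 (norm_nonneg v)
    nlinarith [norm_nonneg v]
  have hintmono : (∫ t in (0:ℝ)..1, g t)
      ≤ ∫ t in (0:ℝ)..1, (⟪f' x, v⟫ + L * ‖v‖ ^ 2 * t) := by
    apply intervalIntegral.integral_mono_on (by norm_num) hint
    · exact (intervalIntegrable_const).add
        ((intervalIntegral.intervalIntegrable_id).const_mul _)
    · exact hbound
  have hcalc : (∫ t in (0:ℝ)..1, (⟪f' x, v⟫ + L * ‖v‖ ^ 2 * t))
      = ⟪f' x, v⟫ + L / 2 * ‖v‖ ^ 2 := by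
    rw [intervalIntegral.integral_add intervalIntegrable_const
      ((intervalIntegral.intervalIntegrable_id).const_mul _),
      intervalIntegral.integral_const,
      intervalIntegral.integral_const_mul, integral_id, smul_eq_mul]
    ring
  have : f y - f x ≤ ⟪f' x, v⟫ + L / 2 * ‖v‖ ^ 2 := by
    have h0 : x + (0:ℝ) • v = x := by simp
    have h1 : x + (1:ℝ) • v = y := by rw [hv]; simp
    rw [h0, h1] at hftc
    rw [hftc]
    exact hintmono.trans_eq hcalc
  linarith

end Aux

/-- If `f` is convex with `L`-Lipschitz gradient on a convex set `Q`, and we have an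
inexact gradient `gA` (accuracy `Δ`) and inexact function values `fδ` (accuracy `δ`),
then the `(δ, Δ, L)`-model inequalities hold. -/
theorem inexact_oracle_of_lipschitz_gradient
    {E : Type*} [NormedAddCommGroup E] [InnerProductSpace ℝ E] [CompleteSpace E]
    (Q : Set E) (hQ : Convex ℝ Q)
    (f : E → ℝ) (f' : E → E)
    (hdiff : ∀ x, HasGradientAt f (f' x) x)
    (hconv : ConvexOn ℝ Q f)
    (L Δ δ : ℝ) (hL : 0 ≤ L) (hΔ : 0 ≤ Δ) (hδ : 0 ≤ δ)
    (hLip : ∀ x ∈ Q, ∀ y ∈ Q, ‖f' x - f' y‖ ≤ L * ‖x - y‖)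
    (gA : E → E) (hg : ∀ x ∈ Q, ‖gA x - f' x‖ ≤ Δ)
    (fδ : E → ℝ) (hfδ : ∀ x ∈ Q, fδ x ≤ f x ∧ f x ≤ fδ x + δ) :
    ∀ x ∈ Q, ∀ y ∈ Q,
      fδ x + ⟪gA x, y - x⟫ - Δ * ‖y - x‖ ≤ f y ∧
      f y ≤ fδ x + ⟪gA x, y - x⟫ + L / 2 * ‖y - x‖ ^ 2 + Δ * ‖y - x‖ + δ := by
  intro x hx y hy
  have hlow := grad_lower_aux Q f f' hdiff hconv hx hy
  have hup := grad_upper_aux Q hQ f f' hdiff L hL hLip hx hy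
  have hgap : |⟪gA x - f' x, y - x⟫| ≤ Δ * ‖y - x‖ := by
    refine (abs_real_inner_le_norm _ _).trans ?_
    exact mul_le_mul_of_nonneg_right (hg x hx) (norm_nonneg _)
  have hsplit : ⟪gA x, y - x⟫ = ⟪f' x, y - x⟫ + ⟪gA x - f' x, y - x⟫ := by
    rw [inner_sub_left]; ring
  obtain ⟨hf1, hf2⟩ := hfδ x hx
  have habs := abs_le.mp hgap
  constructor
  · linarith [habs.1, habs.2]
  · linarith [habs.1, habs.2]
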